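/- Let G be a group and suppose some constant δ ∈ (0,1) witnesses the strong Erdős–Hajnal property for triple products in G. Then there are constants c₁ > 0 and ε₁ ∈ (0,1) such that every finite subset Y ⊆ G of size at least 16 contains a subset Z ⊆ Y, of size at least ε₁·|Y|^(c₁+1)/|Y³|^(c₁), such that |Z⁻¹·Z·Z⁻¹| ≤ |Y|/2. -/

import Mathlib

open Finset Pointwise

/-- A finite subset `A` of a group is product-free if `x * y ∉ A` for all `x, y ∈ A`. -/
def ProductFree {G : Type*} [Group G] (A : Finset G) : Prop :=
  ∀ x ∈ A, ∀ y ∈ A, x * y ∉ A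

/-- `δ` witnesses the strong Erdős–Hajnal property for the triple-product relation
`x₁x₂x₃ = y₁y₂y₃` in the group `G`. -/
def TripleSEH (G : Type*) [Group G] (δ : ℝ) : Prop :=
  ∀ U₁ U₂ U₃ V₁ V₂ V₃ : Finset G,
    ∃ U₁' ⊆ U₁, ∃ U₂' ⊆ U₂, ∃ U₃' ⊆ U₃, ∃ V₁' ⊆ V₁, ∃ V₂' ⊆ V₂, ∃ V₃' ⊆ V₃,
      δ * U₁.card ≤ U₁'.card ∧ δ * U₂.card ≤ U₂'.card ∧ δ * U₃.card ≤ U₃'.card ∧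
      δ * V₁.card ≤ V₁'.card ∧ δ * V₂.card ≤ V₂'.card ∧ δ * V₃.card ≤ V₃'.card ∧
      ((∀ u₁ ∈ U₁', ∀ u₂ ∈ U₂', ∀ u₃ ∈ U₃', ∀ v₁ ∈ V₁', ∀ v₂ ∈ V₂', ∀ v₃ ∈ V₃',
          u₁ * u₂ * u₃ = v₁ * v₂ * v₃) ∨
       (∀ u₁ ∈ U₁', ∀ u₂ ∈ U₂', ∀ u₃ ∈ U₃', ∀ v₁ ∈ V₁', ∀ v₂ ∈ V₂', ∀ v₃ ∈ V₃',
          u₁ * u₂ * u₃ ≠ v₁ * v₂ * v₃))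

namespace SEHAux

variable {G : Type*} [Group G] [DecidableEq G]

lemma mem_triple_mul {A B C : Finset G} {x : G} (hx : x ∈ A * B * C) :
    ∃ a ∈ A, ∃ b ∈ B, ∃ c ∈ C, a * b * c = x := by
  rcases Finset.mem_mul.1 hx with ⟨y, hy, c, hc, rfl⟩
  rcases Finset.mem_mul.1 hy with ⟨a, ha, b, hb, rfl⟩
  exact ⟨a, ha, b, hb, c, hc, rfl⟩

lemma nonempty_of_dense {δ : ℝ} (hδ0 : 0 < δ) {S T : Finset G} (hS : S.Nonempty)
    (h : δ * S.card ≤ T.card) : T.Nonempty := by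
  rw [← Finset.card_pos]
  have h1 : (0 : ℝ) < δ * S.card := by
    have := hS.card_pos
    positivity
  have : (0 : ℝ) < T.card := lt_of_lt_of_le h1 h
  exact_mod_cast this

/-- One halving step coming from the SEH hypothesis. -/
lemma seh_step {δ : ℝ} (hδ0 : 0 < δ) (hSEH : TripleSEH G δ) (A B C : Finset G)
    (hA : A.Nonempty) (hB : B.Nonempty) (hC : C.Nonempty)
    (h2 : 2 ≤ (A * B * C).card) :
    ∃ A' B' C' : Finset G, A' ⊆ A ∧ B' ⊆ B ∧ C' ⊆ C ∧
      δ * A.card ≤ A'.card ∧ δ * B.card ≤ B'.card ∧ δ * C.card ≤ C'.card ∧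
      2 * (A' * B' * C').card ≤ (A * B * C).card := by
  obtain ⟨U₁, hU₁, U₂, hU₂, U₃, hU₃, V₁, hV₁, V₂, hV₂, V₃, hV₃,
    hc₁, hc₂, hc₃, hc₄, hc₅, hc₆, hcase⟩ := hSEH A B C A B C
  have hU₁n : U₁.Nonempty := nonempty_of_dense hδ0 hA hc₁
  have hU₂n : U₂.Nonempty := nonempty_of_dense hδ0 hB hc₂
  have hU₃n : U₃.Nonempty := nonempty_of_dense hδ0 hC hc₃
  have hV₁n : V₁.Nonempty := nonempty_of_dense hδ0 hA hc₄
  have hV₂n : V₂.Nonempty := nonempty_of_dense hδ0 hB hc₅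
  have hV₃n : V₃.Nonempty := nonempty_of_dense hδ0 hC hc₆
  rcases hcase with heq | hne
  · -- all products coincide: the product set is a single point
    refine ⟨U₁, U₂, U₃, hU₁, hU₂, hU₃, hc₁, hc₂, hc₃, ?_⟩
    obtain ⟨v₁, hv₁⟩ := hV₁n
    obtain ⟨v₂, hv₂⟩ := hV₂n
    obtain ⟨v₃, hv₃⟩ := hV₃n
    have hone : (U₁ * U₂ * U₃).card ≤ 1 := by
      apply Finset.card_le_one.2
      intro x hx y hy
      obtain ⟨a, ha, b, hb, c, hc, rfl⟩ := mem_triple_mul hx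
      obtain ⟨a', ha', b', hb', c', hc', rfl⟩ := mem_triple_mul hy
      rw [heq a ha b hb c hc v₁ hv₁ v₂ hv₂ v₃ hv₃,
        heq a' ha' b' hb' c' hc' v₁ hv₁ v₂ hv₂ v₃ hv₃]
    omega
  · -- the two product sets are disjoint subsets of `A * B * C`
    have hdisj : Disjoint (U₁ * U₂ * U₃) (V₁ * V₂ * V₃) := by
      rw [Finset.disjoint_left]
      intro x hx hx'
      obtain ⟨a, ha, b, hb, c, hc, rfl⟩ := mem_triple_mul hx
      obtain ⟨a', ha', b', hb', c', hc', heq'⟩ := mem_triple_mul hx'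
      exact hne a ha b hb c hc a' ha' b' hb' c' hc' heq'.symm
    have hsub1 : U₁ * U₂ * U₃ ⊆ A * B * C :=
      Finset.mul_subset_mul (Finset.mul_subset_mul hU₁ hU₂) hU₃
    have hsub2 : V₁ * V₂ * V₃ ⊆ A * B * C :=
      Finset.mul_subset_mul (Finset.mul_subset_mul hV₁ hV₂) hV₃
    have hsum : (U₁ * U₂ * U₃).card + (V₁ * V₂ * V₃).card ≤ (A * B * C).card := by
      rw [← Finset.card_union_of_disjoint hdisj]
      exact Finset.card_le_card (Finset.union_subset hsub1 hsub2)
    rcases le_total ((U₁ * U₂ * U₃).card) ((V₁ * V₂ * V₃).card) with hle | hle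
    · exact ⟨U₁, U₂, U₃, hU₁, hU₂, hU₃, hc₁, hc₂, hc₃, by omega⟩
    · exact ⟨V₁, V₂, V₃, hV₁, hV₂, hV₃, hc₄, hc₅, hc₆, by omega⟩

/-- Extraction of a single set `Z ⊆ B` with `Z⁻¹ Z Z⁻¹` inside a translate of `A*B*C`,
by averaging over translates. -/
lemma extraction (A B C : Finset G) (hA : A.Nonempty) (hB : B.Nonempty) (hC : C.Nonempty) :
    ∃ Z : Finset G, Z ⊆ B ∧
      A.card * B.card * C.card ≤ Z.card * ((A * B).card * ((B * C).card)) ∧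
      (Z⁻¹ * Z * Z⁻¹).card ≤ (A * B * C).card := by
  classical
  set U : Finset G := (A * B)⁻¹ with hU
  set V : Finset G := (B * C)⁻¹ with hV
  set s : Finset (G × G) := U ×ˢ V with hs
  set Zp : G × G → Finset G :=
    (fun p => B.filter (fun b => p.1⁻¹ * b⁻¹ ∈ A ∧ b⁻¹ * p.2⁻¹ ∈ C)) with hZp
  have hsum : A.card * B.card * C.card ≤ ∑ p ∈ s, (Zp p).card := by
    rw [← Finset.card_sigma]
    have hinj : ((A ×ˢ B) ×ˢ C).card ≤ (s.sigma Zp).card := by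
      apply Finset.card_le_card_of_injOn
        (fun x => ⟨(x.1.2⁻¹ * x.1.1⁻¹, x.2⁻¹ * x.1.2⁻¹), x.1.2⟩)
      · rintro ⟨⟨a, b⟩, c⟩ hx
        simp only [Finset.mem_coe, Finset.mem_product] at hx
        obtain ⟨⟨ha, hb⟩, hc⟩ := hx
        simp only [Finset.mem_coe, Finset.mem_sigma, hs, Finset.mem_product]
        refine ⟨⟨?_, ?_⟩, ?_⟩
        · rw [hU, Finset.mem_inv]
          exact ⟨a * b, Finset.mul_mem_mul ha hb, by group⟩
        · rw [hV, Finset.mem_inv]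
          exact ⟨b * c, Finset.mul_mem_mul hb hc, by group⟩
        · simp only [hZp, Finset.mem_filter]
          refine ⟨hb, ?_, ?_⟩
          · have h : (b⁻¹ * a⁻¹)⁻¹ * b⁻¹ = a := by group
            rw [h]; exact ha
          · have h : b⁻¹ * (c⁻¹ * b⁻¹)⁻¹ = c := by group
            rw [h]; exact hc
      · rintro ⟨⟨a, b⟩, c⟩ - ⟨⟨a', b'⟩, c'⟩ - h
        simp only [Sigma.mk.inj_iff, Prod.mk.injEq, heq_eq_eq] at h
        obtain ⟨⟨h1, h2⟩, h3⟩ := h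
        subst h3
        have ha : a = a' := by
          have := mul_left_cancel h1
          exact inv_injective this
        have hc : c = c' := by
          have := mul_right_cancel h2
          exact inv_injective this
        simp [ha, hc]
    calc A.card * B.card * C.card = ((A ×ˢ B) ×ˢ C).card := by
          simp [Finset.card_product]
      _ ≤ (s.sigma Zp).card := hinj
  have hUne : U.Nonempty := (hA.mul hB).inv
  have hVne : V.Nonempty := (hB.mul hC).inv
  have hsne : s.Nonempty := hUne.product hVne
  obtain ⟨p, hp, hmax⟩ := s.exists_max_image (fun p => (Zp p).card) hsne
  have hbound : ∑ q ∈ s, (Zp q).card ≤ s.card * (Zp p).card := by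
    have := Finset.sum_le_card_nsmul s (fun q => (Zp q).card) ((Zp p).card)
      (fun q hq => hmax q hq)
    simpa [smul_eq_mul] using this
  have hscard : s.card = (A * B).card * (B * C).card := by
    rw [hs, Finset.card_product, hU, hV, Finset.card_inv, Finset.card_inv]
  refine ⟨Zp p, Finset.filter_subset _ _, ?_, ?_⟩
  · calc A.card * B.card * C.card ≤ ∑ q ∈ s, (Zp q).card := hsum
      _ ≤ s.card * (Zp p).card := hbound
      _ = (Zp p).card * ((A * B).card * (B * C).card) := by rw [hscard, Nat.mul_comm]
  · -- `(Zp p)⁻¹ * Zp p * (Zp p)⁻¹` is inside a two-sided translate of `A * B * C`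
    have himg : (Zp p)⁻¹ * Zp p * (Zp p)⁻¹ ⊆
        (A * B * C).image (fun w => p.1 * w * p.2) := by
      intro x hx
      rcases Finset.mem_mul.1 hx with ⟨w, hw, t, ht, rfl⟩
      rcases Finset.mem_mul.1 hw with ⟨r, hr, y, hy, rfl⟩
      rcases Finset.mem_inv.1 hr with ⟨x₁, hx₁, rfl⟩
      rcases Finset.mem_inv.1 ht with ⟨x₂, hx₂, rfl⟩
      have h₁ := (Finset.mem_filter.1 hx₁).2.1
      have hyB := (Finset.mem_filter.1 hy).1
      have h₂ := (Finset.mem_filter.1 hx₂).2.2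
      refine Finset.mem_image.2 ⟨(p.1⁻¹ * x₁⁻¹) * y * (x₂⁻¹ * p.2⁻¹), ?_, by group⟩
      exact Finset.mul_mem_mul (Finset.mul_mem_mul h₁ hyB) h₂
    calc ((Zp p)⁻¹ * Zp p * (Zp p)⁻¹).card
        ≤ ((A * B * C).image (fun w => p.1 * w * p.2)).card := Finset.card_le_card himg
      _ ≤ (A * B * C).card := Finset.card_image_le

/-- The main iteration: triples of dense subsets of `Y` whose product set halves. -/
lemma iterate {δ : ℝ} (hδ0 : 0 < δ) (hδ1 : δ < 1) (hSEH : TripleSEH G δ)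
    (Y : Finset G) (hY : 16 ≤ Y.card) (j : ℕ) :
    ∃ A B C : Finset G, A.Nonempty ∧ B.Nonempty ∧ C.Nonempty ∧ B ⊆ Y ∧
      δ ^ j * Y.card ≤ A.card ∧ δ ^ j * Y.card ≤ B.card ∧ δ ^ j * Y.card ≤ C.card ∧
      ((A * B * C).card : ℝ) ≤
        max (((Y ^ 3 : Finset G).card : ℝ) / 2 ^ j) ((Y.card : ℝ) / 2) := by
  have hYne : Y.Nonempty := Finset.card_pos.1 (by omega)
  induction j with
  | zero =>
      refine ⟨Y, Y, Y, hYne, hYne, hYne, le_rfl, by simp, by simp, by simp, ?_⟩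
      have h3 : (Y : Finset G) ^ 3 = Y * Y * Y := by
        rw [pow_succ, pow_succ, pow_one]
      rw [h3]
      simpa using le_max_left (((Y * Y * Y).card : ℝ)) ((Y.card : ℝ) / 2)
  | succ j ih =>
      obtain ⟨A, B, C, hA, hB, hC, hBY, hcA, hcB, hcC, hprod⟩ := ih
      have hstep : δ ^ (j + 1) * Y.card ≤ δ ^ j * Y.card := by
        have h1 : δ ^ (j + 1) ≤ δ ^ j := by
          rw [pow_succ]
          nlinarith [pow_nonneg hδ0.le j, pow_pos hδ0 j]
        have h2 : (0 : ℝ) ≤ (Y.card : ℝ) := by positivity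
        nlinarith
      rcases le_or_gt ((A * B * C).card : ℝ) ((Y.card : ℝ) / 2) with hsmall | hbig
      · exact ⟨A, B, C, hA, hB, hC, hBY, le_trans hstep hcA, le_trans hstep hcB,
          le_trans hstep hcC, le_trans hsmall (le_max_right _ _)⟩
      · have h16 : (16 : ℝ) ≤ (Y.card : ℝ) := by exact_mod_cast hY
        have h2 : 2 ≤ (A * B * C).card := by
          have : (2 : ℝ) ≤ ((A * B * C).card : ℝ) := by linarith
          exact_mod_cast this
        obtain ⟨A', B', C', hA'A, hB'B, hC'C, hdA, hdB, hdC, hhalf⟩ :=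
          seh_step hδ0 hSEH A B C hA hB hC h2
        have hA'n : A'.Nonempty := nonempty_of_dense hδ0 hA hdA
        have hB'n : B'.Nonempty := nonempty_of_dense hδ0 hB hdB
        have hC'n : C'.Nonempty := nonempty_of_dense hδ0 hC hdC
        have hdense : ∀ {W W' : Finset G}, δ ^ j * Y.card ≤ W.card →
            δ * W.card ≤ W'.card → δ ^ (j + 1) * Y.card ≤ W'.card := by
          intro W W' hW hW'
          have : δ ^ (j + 1) * Y.card = δ * (δ ^ j * Y.card) := by ring
          rw [this]
          calc δ * (δ ^ j * Y.card) ≤ δ * W.card := by nlinarith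
            _ ≤ W'.card := hW'
        refine ⟨A', B', C', hA'n, hB'n, hC'n, hB'B.trans hBY,
          hdense hcA hdA, hdense hcB hdB, hdense hcC hdC, ?_⟩
        have hhalfR : ((A' * B' * C').card : ℝ) ≤ ((A * B * C).card : ℝ) / 2 := by
          have : (2 : ℝ) * ((A' * B' * C').card : ℝ) ≤ ((A * B * C).card : ℝ) := by
            exact_mod_cast hhalf
          linarith
        have hP : ((A * B * C).card : ℝ) / 2 ≤
            max (((Y ^ 3 : Finset G).card : ℝ) / 2 ^ (j + 1)) ((Y.card : ℝ) / 2) := by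
          rcases le_max_iff.1 hprod with h | h
          · exact le_max_iff.2 (Or.inl (by rw [pow_succ (2:ℝ) j, ← div_div]; linarith))
          · exact le_max_iff.2 (Or.inr (by linarith))
        exact hhalfR.trans hP

end SEHAux

set_option maxHeartbeats 2000000

theorem stmt3 {G : Type*} [Group G] [DecidableEq G] (δ : ℝ) (hδ : δ ∈ Set.Ioo (0 : ℝ) 1)
    (hSEH : TripleSEH G δ) :
    ∃ c₁ ε₁ : ℝ, 0 < c₁ ∧ ε₁ ∈ Set.Ioo (0 : ℝ) 1 ∧
      ∀ Y : Finset G, 16 ≤ Y.card →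
        ∃ Z ⊆ Y,
          ε₁ * (Y.card : ℝ) ^ (c₁ + 1) / ((Y ^ 3 : Finset G).card : ℝ) ^ c₁ ≤ Z.card ∧
          ((Z⁻¹ * Z * Z⁻¹).card : ℝ) ≤ (Y.card : ℝ) / 2 := by
  obtain ⟨hδ0, hδ1⟩ := hδ
  set L : ℝ := Real.logb 2 δ⁻¹ with hL
  have hLpos : 0 < L := Real.logb_pos one_lt_two (by
    rw [lt_inv_comm₀] <;> simp [hδ0, hδ1] )
  have hδ91 : δ ^ 9 < 1 := by
    calc δ ^ 9 ≤ δ ^ 1 := by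
          apply pow_le_pow_of_le_one hδ0.le hδ1.le; omega
    _ = δ := pow_one δ
    _ < 1 := hδ1
  refine ⟨3 * L, δ ^ 9, by positivity, ⟨by positivity, hδ91⟩, ?_⟩
  intro Y hY
  have hYne : Y.Nonempty := Finset.card_pos.1 (by omega)
  set n : ℕ := Y.card with hn
  set P3 : ℕ := ((Y ^ 3 : Finset G)).card with hP3
  have hnpos : 0 < n := by omega
  have hn0R : (0 : ℝ) < n := by exact_mod_cast hnpos
  have hnP3 : n ≤ P3 := by
    have h3 : (Y : Finset G) ^ 3 = Y * Y * Y := by rw [pow_succ, pow_succ, pow_one]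
    rw [hP3, h3]
    exact Finset.card_le_card_mul_left (hYne.mul hYne)
  have hP3pos : (0 : ℝ) < P3 := by
    have : 0 < P3 := lt_of_lt_of_le hnpos hnP3
    exact_mod_cast this
  -- choice of the number of halving steps
  obtain ⟨k, hk⟩ : ∃ k : ℕ, k = Nat.clog 2 (2 * (P3 / n + 1)) := ⟨_, rfl⟩
  have hdivlt : (P3 : ℝ) / n < ((P3 / n : ℕ) : ℝ) + 1 := by
    have hmod : P3 % n < n := Nat.mod_lt _ hnpos
    have hdm : n * (P3 / n) + P3 % n = P3 := Nat.div_add_mod P3 n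
    have : P3 < n * (P3 / n + 1) := by rw [Nat.mul_succ]; omega
    have hR : (P3 : ℝ) < (n : ℝ) * (((P3 / n : ℕ) : ℝ) + 1) := by exact_mod_cast this
    rw [div_lt_iff₀ hn0R]
    linarith
  have hk1 : 2 * (P3 : ℝ) ≤ (2 : ℝ) ^ k * n := by
    have hnat : 2 * (P3 / n + 1) ≤ 2 ^ k := hk ▸ Nat.le_pow_clog one_lt_two _
    have hR : (2 : ℝ) * (((P3 / n : ℕ) : ℝ) + 1) ≤ (2 : ℝ) ^ k := by exact_mod_cast hnat
    have hP3lt : (P3 : ℝ) < (((P3 / n : ℕ) : ℝ) + 1) * n := (div_lt_iff₀ hn0R).1 hdivlt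
    nlinarith [hn0R]
  have hk2 : (2 : ℝ) ^ k ≤ 8 * (P3 : ℝ) / n := by
    have hm2 : 1 < 2 * (P3 / n + 1) := by
      have := Nat.zero_le (P3 / n); omega
    have hkpos : 0 < k := hk ▸ Nat.clog_pos one_lt_two hm2
    have hpred : 2 ^ (k - 1) < 2 * (P3 / n + 1) := by
      have := Nat.pow_pred_clog_lt_self (b := 2) one_lt_two hm2
      rw [← hk] at this
      simpa [Nat.pred_eq_sub_one] using this
    have h2k : 2 ^ k ≤ 4 * (P3 / n + 1) := by
      have hkk : k = (k - 1) + 1 := by omega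
      rw [hkk, pow_succ]
      omega
    have hRnat : ((2 : ℝ)) ^ k ≤ 4 * (((P3 / n : ℕ) : ℝ) + 1) := by exact_mod_cast h2k
    have hdiv_le : ((P3 / n : ℕ) : ℝ) ≤ (P3 : ℝ) / n := Nat.cast_div_le
    have hge1 : (1 : ℝ) ≤ (P3 : ℝ) / n := by
      rw [le_div_iff₀ hn0R]
      have : (n : ℝ) ≤ P3 := by exact_mod_cast hnP3
      linarith
    calc ((2 : ℝ)) ^ k ≤ 4 * (((P3 / n : ℕ) : ℝ) + 1) := hRnat
      _ ≤ 4 * ((P3 : ℝ) / n + 1) := by linarith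
      _ ≤ 8 * (P3 : ℝ) / n := by rw [mul_div_assoc]; linarith
  -- run the iteration
  obtain ⟨A, B, C, hA, hB, hC, hBY, hcA, hcB, hcC, hprod⟩ :=
    SEHAux.iterate hδ0 hδ1 hSEH Y hY k
  have hprod2 : ((A * B * C).card : ℝ) ≤ (n : ℝ) / 2 := by
    refine le_trans hprod (max_le ?_ le_rfl)
    rw [div_le_div_iff₀ (by positivity) (by norm_num : (0:ℝ) < 2)]
    nlinarith [hk1]
  obtain ⟨Z, hZB, hZcount, hZsmall⟩ := SEHAux.extraction A B C hA hB hC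
  refine ⟨Z, hZB.trans hBY, ?_, ?_⟩
  · -- size bound
    have hABle : ((A * B).card : ℝ) ≤ (n : ℝ) / 2 := by
      have h1 : (A * B).card ≤ (A * B * C).card := Finset.card_le_card_mul_right hC
      have : ((A * B).card : ℝ) ≤ ((A * B * C).card : ℝ) := by exact_mod_cast h1
      linarith
    have hBCle : ((B * C).card : ℝ) ≤ (n : ℝ) / 2 := by
      have h1 : (B * C).card ≤ (A * (B * C)).card := Finset.card_le_card_mul_left hA
      have h2 : A * (B * C) = A * B * C := (mul_assoc _ _ _).symm
      rw [h2] at h1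
      have : ((B * C).card : ℝ) ≤ ((A * B * C).card : ℝ) := by exact_mod_cast h1
      linarith
    have hm : (0:ℝ) ≤ δ ^ k * n := by positivity
    have hAc : δ ^ k * n ≤ (A.card : ℝ) := hcA
    have hBc : δ ^ k * n ≤ (B.card : ℝ) := hcB
    have hCc : δ ^ k * n ≤ (C.card : ℝ) := hcC
    have hcount : ((A.card : ℝ)) * B.card * C.card ≤
        (Z.card : ℝ) * ((A * B).card * (B * C).card) := by exact_mod_cast hZcount
    have hZnn : (0:ℝ) ≤ (Z.card : ℝ) := by positivity
    have hchain : (δ ^ k * n) ^ 3 ≤ (Z.card : ℝ) * ((n : ℝ) / 2 * ((n : ℝ) / 2)) := by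
      have h1 : (δ ^ k * n) ^ 3 ≤ ((A.card : ℝ)) * B.card * C.card := by
        have := mul_le_mul (mul_le_mul hAc hBc hm (by positivity)) hCc hm (by positivity)
        calc (δ ^ k * n) ^ 3 = (δ ^ k * n) * (δ ^ k * n) * (δ ^ k * n) := by ring
          _ ≤ (A.card : ℝ) * B.card * C.card := this
      have h2 : (Z.card : ℝ) * ((A * B).card * (B * C).card) ≤
          (Z.card : ℝ) * ((n : ℝ) / 2 * ((n : ℝ) / 2)) := by
        apply mul_le_mul_of_nonneg_left _ hZnn
        exact mul_le_mul hABle hBCle (by positivity) (by linarith)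
      linarith
    have hZlow : 4 * δ ^ (3 * k) * n ≤ (Z.card : ℝ) := by
      have hq : (0:ℝ) < (n : ℝ) / 2 * ((n : ℝ) / 2) := by nlinarith [hn0R]
      have heq : (4 * δ ^ (3 * k) * n) * ((n : ℝ) / 2 * ((n : ℝ) / 2)) =
          (δ ^ k * n) ^ 3 := by
        rw [pow_mul']
        ring
      have := hchain
      rw [← heq] at this
      exact le_of_mul_le_mul_right this hq
    -- now the rpow computation
    have h2pos : (0:ℝ) < 2 := by norm_num
    have hδeq : δ = (2 : ℝ) ^ (-L) := by
      rw [hL, Real.logb_inv, neg_neg]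
      exact (Real.rpow_logb h2pos (by norm_num) hδ0).symm
    have hkey : δ ^ 9 * ((n : ℝ) / P3) ^ (3 * L) ≤ δ ^ (3 * k) := by
      have hx : (0:ℝ) < (2:ℝ) ^ (k : ℝ) := Real.rpow_pos_of_pos h2pos _
      have hy : (0:ℝ) < 8 * (P3 : ℝ) / n := div_pos (mul_pos (by norm_num) hP3pos) hn0R
      have hmono : ((2:ℝ) ^ (k:ℝ)) ^ (3 * L) ≤ (8 * (P3:ℝ) / n) ^ (3 * L) := by
        apply Real.rpow_le_rpow (le_of_lt hx) _ (by positivity)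
        rw [Real.rpow_natCast]
        exact hk2
      have hinv : (8 * (P3:ℝ) / n) ^ (-(3 * L)) ≤ ((2:ℝ) ^ (k:ℝ)) ^ (-(3 * L)) := by
        rw [Real.rpow_neg (le_of_lt hy), Real.rpow_neg (le_of_lt hx)]
        apply inv_anti₀ (Real.rpow_pos_of_pos hx _) hmono
      have hlhs : (8 * (P3:ℝ) / n) ^ (-(3 * L)) = δ ^ 9 * ((n : ℝ) / P3) ^ (3 * L) := by
        have h8 : 8 * (P3:ℝ) / n = 8 * ((P3:ℝ) / n) := by ring
        rw [h8, Real.rpow_neg (mul_nonneg (by norm_num) (div_nonneg hP3pos.le hn0R.le)), ← Real.inv_rpow (mul_nonneg (by norm_num) (div_nonneg hP3pos.le hn0R.le)),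
          mul_inv, Real.mul_rpow (by positivity) (inv_nonneg.2 (div_nonneg hP3pos.le hn0R.le))]
        congr 1
        · -- (8⁻¹) ^ (3L) = δ ^ 9
          have h8e : (8:ℝ)⁻¹ = (2:ℝ) ^ (-(3:ℝ)) := by
            rw [Real.rpow_neg (by norm_num : (0:ℝ) ≤ 2)]
            congr 1
            rw [show (3:ℝ) = ((3:ℕ):ℝ) by norm_num, Real.rpow_natCast]
            norm_num
          rw [h8e, ← Real.rpow_natCast (δ) 9, hδeq, ← Real.rpow_mul (by norm_num),
            ← Real.rpow_mul (by norm_num)]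
          congr 1
          ring
        · rw [inv_div]
      have hrhs : ((2:ℝ) ^ (k:ℝ)) ^ (-(3 * L)) = δ ^ (3 * k) := by
        rw [← Real.rpow_natCast δ (3 * k), hδeq, ← Real.rpow_mul (by norm_num),
          ← Real.rpow_mul (by norm_num)]
        congr 1
        push_cast
        ring
      rw [hlhs] at hinv
      rw [hrhs] at hinv
      exact hinv
    -- final assembly
    have hfin : δ ^ 9 * (n : ℝ) ^ (3 * L + 1) / (P3 : ℝ) ^ (3 * L) ≤
        4 * δ ^ (3 * k) * n := by
      have hsplit : (n : ℝ) ^ (3 * L + 1) = (n : ℝ) ^ (3 * L) * n := by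
        rw [Real.rpow_add hn0R, Real.rpow_one]
      have hdivr : ((n : ℝ) / P3) ^ (3 * L) = (n : ℝ) ^ (3 * L) / (P3 : ℝ) ^ (3 * L) :=
        Real.div_rpow hn0R.le hP3pos.le _
      have hP3r : (0:ℝ) < (P3 : ℝ) ^ (3 * L) := Real.rpow_pos_of_pos hP3pos _
      have h1 : δ ^ 9 * (n : ℝ) ^ (3 * L + 1) / (P3 : ℝ) ^ (3 * L) =
          (δ ^ 9 * ((n : ℝ) / P3) ^ (3 * L)) * n := by
        rw [hdivr, hsplit]
        field_simp
      rw [h1]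
      have := mul_le_mul_of_nonneg_right hkey (le_of_lt hn0R)
      have h4 : δ ^ (3 * k) * (n:ℝ) ≤ 4 * δ ^ (3 * k) * n := by
        nlinarith [pow_nonneg hδ0.le (3*k), hn0R]
      linarith
    calc δ ^ 9 * (n : ℝ) ^ (3 * L + 1) / (P3 : ℝ) ^ (3 * L)
        ≤ 4 * δ ^ (3 * k) * n := hfin
      _ ≤ (Z.card : ℝ) := hZlow
  · -- smallness of Z⁻¹ Z Z⁻¹
    have : ((Z⁻¹ * Z * Z⁻¹).card : ℝ) ≤ ((A * B * C).card : ℝ) := by exact_mod_cast hZsmall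
    linarith
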